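/- Let f : ℝ → ℝ be twice continuously differentiable and strictly convex, and let ℓ ≤ u. Define the quadratic extension g of f on [ℓ,u] by g(s) = f(s) for ℓ ≤ s ≤ u, g(s) = f(u) + f'(u)(s-u) + (1/2) f''(u)(s-u)^2 for s > u, and g(s) = f(ℓ) + f'(ℓ)(s-ℓ) + (1/2) f''(ℓ)(s-ℓ)^2 for s < ℓ. If f'' ≥ 0 on [ℓ,u] then g is convex on ℝ. -/

import Mathlib

/-- Quadratic extension of `f` outside `[ℓ, u]`. -/
noncomputable def quadExt (f : ℝ → ℝ) (ℓ u : ℝ) (s : ℝ) : ℝ :=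
  if s < ℓ then
    f ℓ + deriv f ℓ * (s - ℓ) + (1 / 2) * deriv (deriv f) ℓ * (s - ℓ) ^ 2
  else if s ≤ u then f s
  else f u + deriv f u * (s - u) + (1 / 2) * deriv (deriv f) u * (s - u) ^ 2

private lemma quad_hasDerivAt (c b a p x : ℝ) :
    HasDerivAt (fun s : ℝ => c + b * (s - p) + (1 / 2) * a * (s - p) ^ 2)
      (b + a * (x - p)) x := by
  have hx : HasDerivAt (fun s : ℝ => s - p) 1 x := (hasDerivAt_id x).sub_const p
  have h2 : HasDerivAt (fun s : ℝ => (s - p) ^ 2) (2 * (x - p)) x := by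
    simpa using hx.fun_pow 2
  have := ((hx.const_mul b).const_add c).fun_add (h2.const_mul ((1 / 2) * a))
  exact this.congr_deriv (by ring)

private lemma hasDerivWithinAt_of_nmem_closure' {f : ℝ → ℝ} {f' x : ℝ} {s : Set ℝ}
    (h : x ∉ closure s) : HasDerivWithinAt f f' s x :=
  HasFDerivWithinAt.of_notMem_closure h

theorem quadExt_convex (f : ℝ → ℝ) (ℓ u : ℝ) (hℓu : ℓ ≤ u)
    (hf : ContDiff ℝ 2 f) (hconv : StrictConvexOn ℝ Set.univ f)
    (hf'' : ∀ s ∈ Set.Icc ℓ u, 0 ≤ deriv (deriv f) s) :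
    ConvexOn ℝ Set.univ (quadExt f ℓ u) := by
  have h2 : ContDiff ℝ (1 + 1) f := by norm_num; exact hf
  obtain ⟨hfd, -, hf1⟩ := contDiff_succ_iff_deriv.mp h2
  have hf'd : Differentiable ℝ (deriv f) := hf1.differentiable one_ne_zero
  have hmono : MonotoneOn (deriv f) (Set.Icc ℓ u) :=
    monotoneOn_of_deriv_nonneg (convex_Icc ℓ u) hf'd.continuous.continuousOn
      hf'd.differentiableOn (fun x hx => hf'' x (interior_subset hx))
  have hℓ0 : 0 ≤ deriv (deriv f) ℓ := hf'' ℓ ⟨le_rfl, hℓu⟩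
  have hu0 : 0 ≤ deriv (deriv f) u := hf'' u ⟨hℓu, le_rfl⟩
  set φ : ℝ → ℝ := fun s =>
    if s < ℓ then deriv f ℓ + deriv (deriv f) ℓ * (s - ℓ)
    else if s ≤ u then deriv f s
    else deriv f u + deriv (deriv f) u * (s - u) with hφ
  have hder : ∀ x, HasDerivAt (quadExt f ℓ u) (φ x) x := by
    intro x
    have hql : HasDerivWithinAt (quadExt f ℓ u) (φ x) (Set.Iic ℓ) x := by
      rcases le_or_gt x ℓ with hx | hx
      · have hq := (quad_hasDerivAt (f ℓ) (deriv f ℓ) (deriv (deriv f) ℓ) ℓ x).hasDerivWithinAt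
          (s := Set.Iic ℓ)
        have heq : ∀ y ∈ Set.Iic ℓ, quadExt f ℓ u y
            = f ℓ + deriv f ℓ * (y - ℓ) + (1 / 2) * deriv (deriv f) ℓ * (y - ℓ) ^ 2 := by
          intro y hy
          rcases lt_or_eq_of_le (Set.mem_Iic.mp hy) with h | h
          · simp [quadExt, h]
          · subst h; simp [quadExt, hℓu]
        have hφx : φ x = deriv f ℓ + deriv (deriv f) ℓ * (x - ℓ) := by
          rcases lt_or_eq_of_le hx with h | h
          · simp [hφ, h]
          · subst h; simp [hφ, hℓu]
        rw [hφx]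
        exact hq.congr heq (heq x hx)
      · exact hasDerivWithinAt_of_nmem_closure' (by simpa using hx.not_ge)
    have hqm : HasDerivWithinAt (quadExt f ℓ u) (φ x) (Set.Icc ℓ u) x := by
      rcases em (x ∈ Set.Icc ℓ u) with hx | hx
      · have hq := (hfd x).hasDerivAt.hasDerivWithinAt (s := Set.Icc ℓ u)
        have heq : ∀ y ∈ Set.Icc ℓ u, quadExt f ℓ u y = f y := by
          intro y hy
          simp [quadExt, not_lt.mpr hy.1, hy.2]
        have hφx : φ x = deriv f x := by
          simp [hφ, not_lt.mpr hx.1, hx.2]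
        rw [hφx]
        exact hq.congr heq (heq x hx)
      · exact hasDerivWithinAt_of_nmem_closure' (by
          rwa [closure_Icc])
    have hqu : HasDerivWithinAt (quadExt f ℓ u) (φ x) (Set.Ici u) x := by
      rcases le_or_gt u x with hx | hx
      · have hq := (quad_hasDerivAt (f u) (deriv f u) (deriv (deriv f) u) u x).hasDerivWithinAt
          (s := Set.Ici u)
        have heq : ∀ y ∈ Set.Ici u, quadExt f ℓ u y
            = f u + deriv f u * (y - u) + (1 / 2) * deriv (deriv f) u * (y - u) ^ 2 := by
          intro y hy
          rcases lt_or_eq_of_le (Set.mem_Ici.mp hy) with h | h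
          · have : ¬ y < ℓ := not_lt.mpr (hℓu.trans h.le)
            simp [quadExt, this, not_le.mpr h]
          · subst h; simp [quadExt, not_lt.mpr hℓu]
        have hφx : φ x = deriv f u + deriv (deriv f) u * (x - u) := by
          rcases lt_or_eq_of_le hx with h | h
          · simp [hφ, not_lt.mpr (hℓu.trans h.le), not_le.mpr h]
          · subst h; simp [hφ, not_lt.mpr hℓu]
        rw [hφx]
        exact hq.congr heq (heq x hx)
      · exact hasDerivWithinAt_of_nmem_closure' (by simpa using hx.not_ge)
    have := (hql.union hqm).union hqu
    rw [Set.Iic_union_Icc_eq_Iic hℓu, Set.Iic_union_Ici, hasDerivWithinAt_univ] at this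
    exact this
  have hdiff : Differentiable ℝ (quadExt f ℓ u) := fun x => (hder x).differentiableAt
  have hderiv : deriv (quadExt f ℓ u) = φ := funext fun x => (hder x).deriv
  have hφmono : Monotone φ := by
    intro x y hxy
    have key : ∀ z ∈ Set.Icc ℓ u, deriv f ℓ ≤ deriv f z ∧ deriv f z ≤ deriv f u := fun z hz =>
      ⟨hmono ⟨le_rfl, hℓu⟩ hz hz.1, hmono hz ⟨hℓu, le_rfl⟩ hz.2⟩
    have hlu : deriv f ℓ ≤ deriv f u := hmono ⟨le_rfl, hℓu⟩ ⟨hℓu, le_rfl⟩ hℓu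
    simp only [hφ]
    rcases lt_or_ge x ℓ with hx | hx
    · rw [if_pos hx]
      rcases lt_or_ge y ℓ with hy | hy
      · rw [if_pos hy]; nlinarith
      · have h1 : deriv f ℓ + deriv (deriv f) ℓ * (x - ℓ) ≤ deriv f ℓ := by nlinarith
        rw [if_neg (not_lt.mpr hy)]
        rcases le_or_gt y u with hyu | hyu
        · rw [if_pos hyu]; exact h1.trans (key y ⟨hy, hyu⟩).1
        · rw [if_neg (not_le.mpr hyu)]; nlinarith
    · rw [if_neg (not_lt.mpr hx)]
      have hy : ¬ y < ℓ := not_lt.mpr (hx.trans hxy)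
      rw [if_neg hy]
      rcases le_or_gt x u with hxu | hxu
      · rw [if_pos hxu]
        rcases le_or_gt y u with hyu | hyu
        · rw [if_pos hyu]; exact hmono ⟨hx, hxu⟩ ⟨not_lt.mp hy, hyu⟩ hxy
        · rw [if_neg (not_le.mpr hyu)]
          have := (key x ⟨hx, hxu⟩).2; nlinarith
      · rw [if_neg (not_le.mpr hxu), if_neg (not_le.mpr (hxu.trans_le hxy))]
        nlinarith
  rw [← hderiv] at hφmono
  exact hφmono.convexOn_univ_of_deriv hdiff
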